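/- Let ℳ be a bounded operator on a Banach space 𝒳 of functions closed under multiplication by indicators, U,V⊂S disjoint with U≠∅, W=U∪V, and λ,η∈ℂ nonzero with λ in the resolvent set of ℳ_{VV}. Then f∈𝒳 satisfies the three conditions ℳ[U,V,λ](χ_U f)=η(χ_U f), χ_V f = (λ/η)(λI-ℳ_{VV})^{-1}ℳ_{VU}(χ_U f), and χ_{S∖W} f = 0, if and only if (ℳ_{WU} + (η/λ)ℳ_{WV}) f = η f. Moreover, η is an eigenvalue of ℳ[U,V,λ] if and only if η is an eigenvalue of ℳ_{WU} + (η/λ)ℳ_{WV}. -/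

import Mathlib

open ContinuousLinearMap

private lemma comm_inv {A : Type*} [Ring A] {d r x : A} (h1 : d*r = 1) (h2 : r*d = 1)
    (h : x*d = d*x) : x*r = r*x := by
  calc x*r = r*d*x*r := by rw [h2, one_mul]
  _ = r*x*d*r := by rw [mul_assoc r d x, ← h, ← mul_assoc]
  _ = r*x := by rw [mul_assoc, h1, mul_one]

theorem stmt6 {S 𝒳 : Type*} [NormedAddCommGroup 𝒳] [NormedSpace ℂ 𝒳] [CompleteSpace 𝒳]
    (e : Set S → (𝒳 →L[ℂ] 𝒳))
    (he : ∀ U V : Set S, (e U) ∘L (e V) = e (U ∩ V))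
    (hbot : e ∅ = 0)
    (hadd : ∀ U V : Set S, Disjoint U V → e (U ∪ V) = e U + e V)
    (hcompl : ∀ U : Set S, e U + e Uᶜ = 1)
    (ℳ : 𝒳 →L[ℂ] 𝒳) (U V : Set S) (hUV : Disjoint U V) (hU : U.Nonempty)
    (lam η : ℂ) (hlam : lam ≠ 0) (hη : η ≠ 0)
    (R : 𝒳 →L[ℂ] 𝒳)
    (hR1 : (lam • (1 : 𝒳 →L[ℂ] 𝒳) - (e V ∘L ℳ ∘L e V)) ∘L R = 1)
    (hR2 : R ∘L (lam • (1 : 𝒳 →L[ℂ] 𝒳) - (e V ∘L ℳ ∘L e V)) = 1) :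
    let W := U ∪ V
    let MUU := e U ∘L ℳ ∘L e U
    let MUV := e U ∘L ℳ ∘L e V
    let MVU := e V ∘L ℳ ∘L e U
    let MWU := e W ∘L ℳ ∘L e U
    let MWV := e W ∘L ℳ ∘L e V
    let PC := MUU + MUV ∘L (R ∘L MVU)
    (∀ f : 𝒳,
      (PC (e U f) = η • e U f ∧
        e V f = (lam / η) • R (MVU (e U f)) ∧
        e Wᶜ f = 0) ↔
      (MWU + (η / lam) • MWV) f = η • f) ∧
    ((∃ f : 𝒳, f ≠ 0 ∧ PC f = η • f) ↔
      (∃ f : 𝒳, f ≠ 0 ∧ (MWU + (η / lam) • MWV) f = η • f)) := by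
  intro W MUU MUV MVU MWU MWV PC
  have hWdef : W = U ∪ V := rfl
  -- pointwise projection identities
  have hz : ∀ A B : Set S, A ∩ B = ∅ → ∀ x, e A (e B x) = 0 := by
    intro A B hAB x
    have h : e A ∘L e B = 0 := by rw [he, hAB, hbot]
    simpa using DFunLike.congr_fun h x
  have hid : ∀ (A : Set S) (x : 𝒳), e A (e A x) = e A x := by
    intro A x
    have h : e A ∘L e A = e A := by rw [he, Set.inter_self]
    simpa using DFunLike.congr_fun h x
  have sUV : U ∩ V = ∅ := hUV.inter_eq
  have sVU : V ∩ U = ∅ := hUV.symm.inter_eq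
  have sCU : Wᶜ ∩ U = ∅ := by rw [hWdef]; ext s; simp; try tauto
  have sCV : Wᶜ ∩ V = ∅ := by rw [hWdef]; ext s; simp; try tauto
  have sCW : Wᶜ ∩ W = ∅ := Set.compl_inter_self W
  have sVW : V ∩ W = V := by rw [hWdef]; ext s; simp; try tauto
  have sUW : U ∩ W = U := by rw [hWdef]; ext s; simp; try tauto
  have hUVz : ∀ x, e U (e V x) = 0 := hz U V sUV
  have hVUz : ∀ x, e V (e U x) = 0 := hz V U sVU
  have hCUz : ∀ x, e Wᶜ (e U x) = 0 := hz Wᶜ U sCU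
  have hCVz : ∀ x, e Wᶜ (e V x) = 0 := hz Wᶜ V sCV
  have hCWz : ∀ x, e Wᶜ (e W x) = 0 := hz Wᶜ W sCW
  have hVW : ∀ x, e V (e W x) = e V x := by
    intro x
    have h : e V ∘L e W = e V := by rw [he, sVW]
    simpa using DFunLike.congr_fun h x
  have hUW : ∀ x, e U (e W x) = e U x := by
    intro x
    have h : e U ∘L e W = e U := by rw [he, sUW]
    simpa using DFunLike.congr_fun h x
  have heW : ∀ x, e W x = e U x + e V x := by
    intro x
    have h := hadd U V hUV
    rw [hWdef, h]; rfl
  have hsplit : ∀ x, e U x + e V x + e Wᶜ x = x := by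
    intro x
    have h := DFunLike.congr_fun (hcompl W) x
    simp only [add_apply, one_apply_eq_self] at h
    rw [← heW x, h]
  -- pointwise resolvent identities
  have hR1pt : ∀ x, lam • R x - e V (ℳ (e V (R x))) = x := by
    intro x
    have := DFunLike.congr_fun hR1 x
    simpa [sub_apply, smul_apply, one_apply] using this
  have hR2pt : ∀ x, R (lam • x - e V (ℳ (e V x))) = x := by
    intro x
    have := DFunLike.congr_fun hR2 x
    simpa [sub_apply, smul_apply, one_apply] using this
  -- the resolvent-type operator
  set D : 𝒳 →L[ℂ] 𝒳 := lam • (1 : 𝒳 →L[ℂ] 𝒳) - (e V ∘L ℳ ∘L e V) with hD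
  have hR1' : D * R = 1 := hR1
  have hR2' : R * D = 1 := hR2
  have hVD : e V * D = D * e V := by
    ext x
    simp only [mul_apply_eq_comp, hD, sub_apply, smul_apply, one_apply_eq_self, coe_comp', Function.comp_apply,
      map_sub, map_smul, hid]
  have hVR : ∀ x, e V (R x) = R (e V x) := by
    intro x
    have h := comm_inv hR1' hR2' hVD
    exact DFunLike.congr_fun h x
  have hUR : ∀ x, e U (R x) = lam⁻¹ • e U x := by
    intro x
    have hUD : e U * D = lam • e U := by
      ext y
      simp only [mul_apply_eq_comp, hD, sub_apply, smul_apply, one_apply_eq_self, coe_comp',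
        Function.comp_apply, map_sub, map_smul, hUVz, smul_zero, sub_zero]
    have h : e U x = lam • e U (R x) := by
      have h1 : e U * (D * R) = e U := by rw [hR1', mul_one]
      have h2 : e U * (D * R) = lam • (e U * R) := by
        rw [← mul_assoc, hUD, smul_mul_assoc]
      rw [h2] at h1
      have := DFunLike.congr_fun h1 x
      simpa [mul_apply] using this.symm
    rw [h, smul_smul, inv_mul_cancel₀ hlam, one_smul]
  -- ℳ_VV applied to resolvent image
  have hMVVR : ∀ x, e V (ℳ (R (e V x))) = lam • R (e V x) - e V x := by
    intro x
    have h := hR1pt (e V x)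
    have h2 : e V (R (e V x)) = R (e V x) := by rw [hVR, hid]
    rw [h2] at h
    have h' := sub_eq_iff_eq_add.mp h
    rw [h']; abel
  -- scalar facts
  have hc1 : (η/lam) * (lam/η) = 1 := by field_simp
  have hc2 : η * (lam/η) = lam := by field_simp
  have hc3 : (lam/η) * (η/lam) = 1 := by field_simp
  have hc4 : (lam/η) * η = lam := by field_simp
  -- pointwise form of PC
  have hPCpt : ∀ x, PC (e U x) = e U (ℳ (e U x)) + e U (ℳ (R (e V (ℳ (e U x))))) := by
    intro x
    show MUU (e U x) + MUV (R (MVU (e U x))) = _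
    show e U (ℳ (e U (e U x))) + e U (ℳ (e V (R (e V (ℳ (e U (e U x))))))) = _
    rw [hid, hVR, hid]
  -- main equivalence
  have main : ∀ f : 𝒳,
      (PC (e U f) = η • e U f ∧
        e V f = (lam / η) • R (MVU (e U f)) ∧
        e Wᶜ f = 0) ↔
      (MWU + (η / lam) • MWV) f = η • f := by
    intro f
    have hMVUpt : MVU (e U f) = e V (ℳ (e U f)) := by
      show e V (ℳ (e U (e U f))) = _
      rw [hid]
    constructor
    · rintro ⟨h1, h2, h3⟩
      rw [hMVUpt] at h2
      rw [hPCpt] at h1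
      show e W (ℳ (e U f)) + (η/lam) • e W (ℳ (e V f)) = η • f
      have hf : f = e U f + e V f := by
        have := hsplit f
        rw [h3, add_zero] at this
        exact this.symm
      set g := e U f with hg
      set z := e V (ℳ g) with hzdef
      set r := R z with hr
      have hd : e V (ℳ r) = lam • r - z := by
        rw [hr, hzdef, ← hid V (ℳ g)]
        rw [← hzdef]
        have := hMVVR (ℳ g)
        rw [← hzdef] at this
        rw [hid]
        exact this
      rw [h2]
      rw [map_smul, map_smul, smul_smul, hc1, one_smul]
      rw [heW (ℳ g), heW (ℳ r)]
      conv_rhs => rw [hf, h2]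
      rw [hd]
      rw [smul_add, smul_smul, hc2, ← h1]
      abel
    · intro H
      have H' : e W (ℳ (e U f)) + (η/lam) • e W (ℳ (e V f)) = η • f := H
      -- e Wᶜ f = 0
      have h3 : e Wᶜ f = 0 := by
        have := congrArg (e Wᶜ) H'
        simp only [map_add, map_smul, hCWz, smul_zero, add_zero] at this
        have h0 : η • e Wᶜ f = 0 := this.symm
        rcases smul_eq_zero.mp h0 with h | h
        · exact absurd h hη
        · exact h
      -- apply e V
      have hVeq : e V (ℳ (e U f)) + (η/lam) • e V (ℳ (e V f)) = η • e V f := by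
        have := congrArg (e V) H'
        simpa only [map_add, map_smul, hVW] using this
      have h2 : e V f = (lam/η) • R (e V (ℳ (e U f))) := by
        have key : lam • e V f - e V (ℳ (e V f)) = (lam/η) • e V (ℳ (e U f)) := by
          have h0 := congrArg (fun y => (lam/η) • y) hVeq
          simp only [smul_add, smul_smul] at h0
          rw [hc3, one_smul, hc4] at h0
          rw [← h0]; abel
        have hfin := hR2pt (e V f)
        rw [hid] at hfin
        rw [key] at hfin
        rw [← hfin, map_smul]
      refine ⟨?_, ?_, h3⟩
      · -- PC part
        have hUeq : e U (ℳ (e U f)) + (η/lam) • e U (ℳ (e V f)) = η • e U f := by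
          have := congrArg (e U) H'
          simpa only [map_add, map_smul, hUW] using this
        rw [hPCpt]
        rw [h2] at hUeq
        rw [map_smul, map_smul, smul_smul, hc1, one_smul] at hUeq
        exact hUeq
      · rw [hMVUpt]; exact h2
  refine ⟨main, ?_⟩
  constructor
  · rintro ⟨f, hf0, hPCf⟩
    have hUf : e U f = f := by
      have h1 : e U (PC f) = PC f := by
        show e U (MUU f + MUV (R (MVU f))) = _
        show e U (e U (ℳ (e U f)) + e U (ℳ (e V (R (e V (ℳ (e U f))))))) = _
        rw [map_add, hid, hid]
        rfl
      rw [hPCf, map_smul] at h1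
      have := smul_right_injective 𝒳 hη h1
      exact this
    set h := f + (lam/η) • R (e V (ℳ f)) with hh
    have hUh : e U h = f := by
      rw [hh, map_add, map_smul, hUR, hUVz]
      simp [hUf]
    have hh0 : h ≠ 0 := by
      intro hc
      apply hf0
      rw [← hUh, hc, map_zero]
    refine ⟨h, hh0, (main h).mp ⟨?_, ?_, ?_⟩⟩
    · rw [hUh, hPCf]
    · have hMVUpt : MVU (e U h) = e V (ℳ (e U h)) := by
        show e V (ℳ (e U (e U h))) = _
        rw [hid]
      rw [hMVUpt, hUh]
      rw [hh, map_add, map_smul]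
      rw [← hUf, hVUz]
      rw [hVR, hid, hUf]
      simp
    · rw [hh, map_add, map_smul]
      rw [← hUf, hCUz, hUf]
      rw [← hVR, hCVz]
      simp
  · rintro ⟨f, hf0, hf⟩
    obtain ⟨h1, h2, h3⟩ := (main f).mpr hf
    refine ⟨e U f, ?_, h1⟩
    intro hc
    apply hf0
    simp only [hc, map_zero, smul_zero] at h2
    have := hsplit f
    rw [hc, h2, h3] at this
    simpa using this.symm
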